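/- Let k be a field and let u ∈ k((t)) be a formal Laurent series lying in t^{-1}·k[[t]] but not in k[[t]] (equivalently, u has order exactly −1). Let A = k[u] be the k-subalgebra of k((t)) generated by u. Then the sequence 0 → k → k[u] → k((t))/k[[t]] → 0 is exact; concretely: (i) A ∩ k[[t]] = k (the only polynomials in u lying in k[[t]] are the constants), and (ii) A + k[[t]] = k((t)) (every Laurent series is a polynomial in u plus a power series). -/

import Mathlib

section Aux

variable {k : Type*} [Field k]

/-- A power series, viewed as a Laurent series, has vanishing negative coefficients. -/
lemma aux_ofPowerSeries_coeff_neg (f : PowerSeries k) {i : ℤ} (hi : i < 0) :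
    (HahnSeries.ofPowerSeries ℤ k f).coeff i = 0 := by
  rw [HahnSeries.ofPowerSeries_apply, HahnSeries.embDomain_notin_range]
  simp only [Set.mem_range, RelEmbedding.coe_mk, Function.Embedding.coeFn_mk, Nat.castOrderEmbedding_apply]
  rintro ⟨m, hm⟩
  omega

/-- Conversely, a Laurent series with vanishing negative coefficients is a power series. -/
lemma aux_mem_range_of_coeff (x : LaurentSeries k) (hx : ∀ i : ℤ, i < 0 → x.coeff i = 0) :
    x ∈ Set.range (HahnSeries.ofPowerSeries ℤ k) := by
  rcases eq_or_ne x 0 with rfl | hx0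
  · exact ⟨0, by simp⟩
  have ho : 0 ≤ x.order := by
    by_contra h
    exact HahnSeries.coeff_order_eq_zero.not.mpr hx0 (hx _ (lt_of_not_ge h))
  exact ⟨PowerSeries.X ^ x.order.toNat * x.powerSeriesPart,
    LaurentSeries.X_order_mul_powerSeriesPart (Int.toNat_of_nonneg ho)⟩

/-- `algebraMap k (LaurentSeries k)` is the Hahn series `single 0`. -/
lemma aux_algebraMap_eq_single (e : k) :
    (algebraMap k (LaurentSeries k)) e = HahnSeries.single (0 : ℤ) e := by
  rw [show (algebraMap k (LaurentSeries k)) e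
      = HahnSeries.ofPowerSeries ℤ k (PowerSeries.C e) from rfl,
    HahnSeries.ofPowerSeries_C]
  exact HahnSeries.C_apply e

/-- Coefficients of a scalar multiple. -/
lemma aux_algebraMap_mul_coeff (e : k) (x : LaurentSeries k) (i : ℤ) :
    ((algebraMap k (LaurentSeries k)) e * x).coeff i = e * x.coeff i := by
  rw [aux_algebraMap_eq_single, ← add_zero i, HahnSeries.coeff_single_mul_add, add_zero]

/-- Coefficients of a finite sum. -/
lemma aux_coeff_sum {α : Type*} (s : Finset α) (f : α → LaurentSeries k) (i : ℤ) :
    (∑ a ∈ s, f a).coeff i = ∑ a ∈ s, (f a).coeff i :=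
  map_sum (HahnSeries.coeff.addMonoidHom i) f s

end Aux

set_option maxHeartbeats 1000000 in
/-- If `u ∈ k((t))` lies in `t⁻¹·k[[t]]` but not in `k[[t]]` (i.e. `u` has order exactly `-1`),
then `0 → k → k[u] → k((t))/k[[t]] → 0` is exact: (i) the only elements of `k[u] ∩ k[[t]]`
are the constants, and (ii) every Laurent series is a polynomial in `u` plus a power series. -/
theorem laurentSeries_adjoin_inf_powerSeries
    (k : Type*) [Field k] (u : LaurentSeries k)
    (h1 : HahnSeries.single (1 : ℤ) (1 : k) * u ∈ Set.range (HahnSeries.ofPowerSeries ℤ k))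
    (h2 : u ∉ Set.range (HahnSeries.ofPowerSeries ℤ k)) :
    (∀ a ∈ Algebra.adjoin k {u}, a ∈ Set.range (HahnSeries.ofPowerSeries ℤ k) →
      ∃ c : k, a = algebraMap k (LaurentSeries k) c) ∧
    (∀ w : LaurentSeries k, ∃ a ∈ Algebra.adjoin k {u}, ∃ f : PowerSeries k,
      w = a + HahnSeries.ofPowerSeries ℤ k f) := by
  -- coefficients of `u` below `-1` vanish
  obtain ⟨g, hg⟩ := h1
  have hneg : ∀ i : ℤ, i < -1 → u.coeff i = 0 := by
    intro i hi
    have := HahnSeries.coeff_single_mul_add (r := (1 : k)) (x := u) (a := i) (b := 1)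
    rw [← hg] at this
    rw [← one_mul (u.coeff i), ← this, aux_ofPowerSeries_coeff_neg _ (by omega)]
  set d : k := u.coeff (-1) with hd_def
  have hd : d ≠ 0 := by
    intro h0
    apply h2
    apply aux_mem_range_of_coeff
    intro i hi
    rcases lt_or_eq_of_le (by omega : i ≤ -1) with h | h
    · exact hneg i h
    · rw [h, ← hd_def, h0]
  have hu0 : u ≠ 0 := by
    rintro rfl
    exact h2 ⟨0, by simp⟩
  have hord : u.order = -1 := by
    apply le_antisymm
    · exact HahnSeries.order_le_of_coeff_ne_zero (by rw [← hd_def]; exact hd)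
    · by_contra h
      exact HahnSeries.coeff_order_eq_zero.not.mpr hu0 (hneg _ (lt_of_not_ge h))
  -- powers of u
  have hpow_ord : ∀ m : ℕ, (u ^ m).order = -(m : ℤ) := by
    intro m
    rw [HahnSeries.order_pow, hord]
    simp
  have hpow_ne : ∀ m : ℕ, (u ^ m) ≠ 0 := fun m => pow_ne_zero m hu0
  have hpow_coeff : ∀ m : ℕ, (u ^ m).coeff (-(m : ℤ)) = d ^ m := by
    intro m
    induction m with
    | zero => simp
    | succ n ih =>
      have h3 := HahnSeries.coeff_mul_order_add_order u (u ^ n)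
      rw [hord, hpow_ord n, HahnSeries.leadingCoeff_eq, HahnSeries.leadingCoeff_eq,
        hord, hpow_ord n] at h3
      rw [pow_succ, mul_comm (u ^ n) u]
      have heq : -((n + 1 : ℕ) : ℤ) = -1 + -(n : ℤ) := by push_cast; ring
      rw [heq, h3, ih, ← hd_def, pow_succ, mul_comm]
  have hpow_lt : ∀ (m : ℕ) (i : ℤ), i < -(m : ℤ) → (u ^ m).coeff i = 0 := by
    intro m i hi
    exact HahnSeries.coeff_eq_zero_of_lt_order (by rw [hpow_ord]; exact hi)
  constructor
  · -- part (i)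
    intro a ha har
    rw [Algebra.adjoin_singleton_eq_range_aeval] at ha
    obtain ⟨p, hp⟩ := ha
    simp only [AlgHom.toRingHom_eq_coe, RingHom.coe_coe] at hp
    subst hp
    have hcoeff : ∀ i : ℤ, i < 0 → (Polynomial.aeval u p).coeff i = 0 := by
      obtain ⟨f, hf⟩ := har
      intro i hi
      have := aux_ofPowerSeries_coeff_neg f hi
      rw [hf] at this
      exact this
    set n := p.natDegree with hn
    rcases Nat.eq_zero_or_pos n with h0 | hpos
    · refine ⟨p.coeff 0, ?_⟩
      conv_lhs => rw [Polynomial.eq_C_of_natDegree_eq_zero h0]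
      rw [Polynomial.aeval_C]
    · exfalso
      have hsum := Polynomial.aeval_eq_sum_range (p := p) u
      have hac := hcoeff (-(n : ℤ)) (by omega)
      rw [hsum] at hac
      simp only [Algebra.smul_def] at hac
      rw [aux_coeff_sum] at hac
      rw [Finset.sum_eq_single n] at hac
      · rw [aux_algebraMap_mul_coeff, hpow_coeff n] at hac
        have : p.coeff n = 0 := by
          rcases mul_eq_zero.mp hac with h | h
          · exact h
          · exact absurd h (pow_ne_zero n hd)
        refine Polynomial.leadingCoeff_ne_zero.mpr (fun hq => ?_) this
        rw [hq, Polynomial.natDegree_zero] at hn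
        omega
      · intro i hi hine
        have hi' : i < n := by
          have := Finset.mem_range.mp hi; omega
        rw [aux_algebraMap_mul_coeff, hpow_lt i (-(n : ℤ)) (by omega), mul_zero]
      · intro h
        exact absurd (Finset.self_mem_range_succ n) h
  · -- part (ii)
    have key : ∀ n : ℕ, ∀ w : LaurentSeries k, (∀ i : ℤ, i < -(n : ℤ) → w.coeff i = 0) →
        ∃ a ∈ Algebra.adjoin k {u}, ∃ f : PowerSeries k,
          w = a + HahnSeries.ofPowerSeries ℤ k f := by
      intro n
      induction n with
      | zero =>
        intro w hw
        obtain ⟨f, hf⟩ := aux_mem_range_of_coeff w (by simpa using hw)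
        exact ⟨0, Subalgebra.zero_mem _, f, by rw [hf, zero_add]⟩
      | succ n ih =>
        intro w hw
        set m : ℕ := n + 1 with hm
        set c : k := w.coeff (-(m : ℤ)) with hc
        set e : k := c / d ^ m with he
        set w' : LaurentSeries k := w - (algebraMap k (LaurentSeries k) e) * u ^ m with hw'
        have hcw' : ∀ i : ℤ, i < -(n : ℤ) → w'.coeff i = 0 := by
          intro i hi
          rw [hw', HahnSeries.coeff_sub, aux_algebraMap_mul_coeff]
          rcases lt_or_eq_of_le (by push_cast; omega : i ≤ -(m : ℤ)) with h | h
          · rw [hw i (by push_cast at h ⊢; omega), hpow_lt m i h, mul_zero, sub_zero]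
          · rw [h, hpow_coeff m, he, div_mul_cancel₀ _ (pow_ne_zero m hd), ← hc, sub_self]
        clear_value c e w'
        obtain ⟨a, haadj, f, hf⟩ := ih w' hcw'
        refine ⟨a + (algebraMap k (LaurentSeries k) e) * u ^ m, ?_, f, ?_⟩
        · exact Subalgebra.add_mem _ haadj
            (Subalgebra.mul_mem _ (Subalgebra.algebraMap_mem _ e)
              (Subalgebra.pow_mem _ (Algebra.self_mem_adjoin_singleton k u) m))
        · rw [hw', sub_eq_iff_eq_add] at hf
          rw [hf]
          abel
    intro w
    refine key (-w.order).toNat w ?_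
    intro i hi
    apply HahnSeries.coeff_eq_zero_of_lt_order
    omega
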